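/- Let Λ, Ω, Y be normed vector spaces, X a reflexive Banach space, and D a nonempty compact convex subset of X. Let K : D × Λ → 2^D and F : D × D × Ω → 2^Y be set-valued mappings and C ⊆ Y a closed set with nonempty interior; define M₁(u, λ) = {x ∈ cl K(x, λ) : F(x, y, u) ∩ (Y \ (−int C)) ≠ ∅ for all y ∈ K(x, λ)}, and assume M₁(u, λ) ≠ ∅ for all (u, λ) in a neighborhood of (u₀, λ₀) ∈ Ω × Λ. Assume: (i) K(·, λ₀) is rotund and K is continuous at every point of D × {λ₀} with nonempty closed convex values; (ii) F has the C-inclusion property at every point of D × D × {u₀}. Then M₁(·, ·) is lower semicontinuous at (u₀, λ₀). -/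

import Mathlib

open Filter Topology Set Pointwise

/-- A set-valued mapping `Φ` is lower semicontinuous at `u₀` if for every `x ∈ Φ(u₀)` and
every open neighborhood `V` of `x` there is a neighborhood `U` of `u₀` such that
`Φ(u) ∩ V ≠ ∅` for all `u ∈ U`. -/
def LscAt {Δ Δ₁ : Type*} [TopologicalSpace Δ] [TopologicalSpace Δ₁]
    (Φ : Δ → Set Δ₁) (u₀ : Δ) : Prop :=
  ∀ x ∈ Φ u₀, ∀ V : Set Δ₁, IsOpen V → x ∈ V →
    ∃ U ∈ 𝓝 u₀, ∀ u ∈ U, (Φ u ∩ V).Nonempty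

/-- Lower semicontinuity at `u₀` of a set-valued mapping whose domain is the subset `s`
(neighborhoods are taken relative to `s`). -/
def LscWithinAt {Δ Δ₁ : Type*} [TopologicalSpace Δ] [TopologicalSpace Δ₁]
    (Φ : Δ → Set Δ₁) (s : Set Δ) (u₀ : Δ) : Prop :=
  ∀ x ∈ Φ u₀, ∀ V : Set Δ₁, IsOpen V → x ∈ V →
    ∃ U ∈ 𝓝[s] u₀, ∀ u ∈ U, (Φ u ∩ V).Nonempty

/-- A set-valued mapping `Φ` is upper semicontinuous at `u₀` if for every open `V ⊇ Φ(u₀)`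
there is a neighborhood `U` of `u₀` with `Φ(u) ⊆ V` for all `u ∈ U`. -/
def UscAt {Δ Δ₁ : Type*} [TopologicalSpace Δ] [TopologicalSpace Δ₁]
    (Φ : Δ → Set Δ₁) (u₀ : Δ) : Prop :=
  ∀ V : Set Δ₁, IsOpen V → Φ u₀ ⊆ V → ∃ U ∈ 𝓝 u₀, ∀ u ∈ U, Φ u ⊆ V

/-- Upper semicontinuity at `u₀` of a set-valued mapping whose domain is the subset `s`
(neighborhoods are taken relative to `s`). -/
def UscWithinAt {Δ Δ₁ : Type*} [TopologicalSpace Δ] [TopologicalSpace Δ₁]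
    (Φ : Δ → Set Δ₁) (s : Set Δ) (u₀ : Δ) : Prop :=
  ∀ V : Set Δ₁, IsOpen V → Φ u₀ ⊆ V → ∃ U ∈ 𝓝[s] u₀, ∀ u ∈ U, Φ u ⊆ V

/-- The graph of a set-valued mapping `Φ` with domain `A`. -/
def GraphOn {X Z : Type*} (A : Set X) (Φ : X → Set Z) : Set (X × Z) :=
  {p | p.1 ∈ A ∧ p.2 ∈ Φ p.1}

/-- A set-valued mapping `Φ` with domain `A` is rotund if its graph is convex and, for any
two points of the graph with distinct first components and distinct second components,
the open segment between them meets the complement of the boundary of the graph. -/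
def RotundOn {X Z : Type*} [NormedAddCommGroup X] [NormedSpace ℝ X]
    [NormedAddCommGroup Z] [NormedSpace ℝ Z] (A : Set X) (Φ : X → Set Z) : Prop :=
  Convex ℝ (GraphOn A Φ) ∧
    ∀ p ∈ GraphOn A Φ, ∀ q ∈ GraphOn A Φ, p.1 ≠ q.1 → p.2 ≠ q.2 →
      ∃ l ∈ Set.Ioo (0 : ℝ) 1, l • p + (1 - l) • q ∈ (frontier (GraphOn A Φ))ᶜ

/-- `Ψ` has the `C`-inclusion property at `p₀` (relative to the domain `s`): for every
sequence in `s` converging to `p₀`, if `Ψ(p₀) ∩ (Y \ −int C) ≠ ∅` then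
`Ψ(pₙ) ∩ (Y \ −int C) ≠ ∅` for some index `n`. -/
def CInclusionWithinAt {P Y : Type*} [TopologicalSpace P] [TopologicalSpace Y]
    [NormedAddCommGroup Y] (Ψ : P → Set Y) (C : Set Y) (s : Set P) (p₀ : P) : Prop :=
  ∀ p : ℕ → P, (∀ n, p n ∈ s) → Filter.Tendsto p Filter.atTop (𝓝 p₀) →
    (Ψ p₀ ∩ (-(interior C))ᶜ).Nonempty → ∃ n, (Ψ (p n) ∩ (-(interior C))ᶜ).Nonempty

/-- Extract a direction almost attaining the operator norm of a nonzero real functional. -/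
lemma exists_unit_lt_apply' {X : Type*} [NormedAddCommGroup X] [NormedSpace ℝ X]
    (f : X →L[ℝ] ℝ) (hf : f ≠ 0) : ∃ v : X, ‖v‖ ≤ 1 ∧ ‖f‖ / 2 < f v := by
  have hfpos : 0 < ‖f‖ := norm_pos_iff.mpr hf
  by_contra h
  push_neg at h
  have hb : ∀ v : X, ‖v‖ ≤ 1 → ‖f v‖ ≤ ‖f‖ / 2 := by
    intro v hv
    rw [Real.norm_eq_abs, abs_le]
    constructor
    · have h2 := h (-v) (by simpa using hv)
      simp only [map_neg] at h2
      linarith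
    · exact h v hv
  have hle : ‖f‖ ≤ ‖f‖ / 2 := by
    refine f.opNorm_le_bound (by positivity) (fun x => ?_)
    rcases eq_or_ne x 0 with rfl | hx
    · simp
    · have hxn : 0 < ‖x‖ := norm_pos_iff.mpr hx
      have h1 : ‖f ((‖x‖)⁻¹ • x)‖ ≤ ‖f‖ / 2 := by
        refine hb _ ?_
        rw [norm_smul, Real.norm_eq_abs, abs_of_nonneg (by positivity), inv_mul_cancel₀ hxn.ne']
      rw [map_smul, smul_eq_mul, Real.norm_eq_abs, abs_mul, abs_of_nonneg (by positivity)] at h1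
      rw [Real.norm_eq_abs]
      calc |f x| = ‖x‖ * ((‖x‖)⁻¹ * |f x|) := by field_simp
      _ ≤ ‖x‖ * (‖f‖ / 2) := by
          refine mul_le_mul_of_nonneg_left ?_ (norm_nonneg x)
          simpa [Real.norm_eq_abs] using h1
      _ = ‖f‖ / 2 * ‖x‖ := by ring
  linarith

/-- A point that is the limit of points of `K (a n) (μ n)` belongs to `K x₀ l₀` when `K` is
u.s.c. at `(x₀, l₀)` with closed value there. -/
lemma mem_of_usc_limit' {X Λ : Type*} [NormedAddCommGroup X] [NormedAddCommGroup Λ]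
    (D : Set X) (K : X → Λ → Set X) (x₀ yb : X) (l₀ : Λ)
    (husc : UscWithinAt (fun p : X × Λ => K p.1 p.2) (D ×ˢ (univ : Set Λ)) (x₀, l₀))
    (hcl : IsClosed (K x₀ l₀)) (hne : (K x₀ l₀).Nonempty)
    (a : ℕ → X) (μ : ℕ → Λ) (b : ℕ → X)
    (haD : ∀ n, a n ∈ D) (hb : ∀ n, b n ∈ K (a n) (μ n))
    (hca : Tendsto a atTop (𝓝 x₀)) (hcμ : Tendsto μ atTop (𝓝 l₀))
    (hcb : Tendsto b atTop (𝓝 yb)) : yb ∈ K x₀ l₀ := by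
  rw [hcl.mem_iff_infDist_zero hne]
  have hnonneg : 0 ≤ Metric.infDist yb (K x₀ l₀) := Metric.infDist_nonneg
  by_contra h0
  have hpos : 0 < Metric.infDist yb (K x₀ l₀) := lt_of_le_of_ne hnonneg (Ne.symm h0)
  set ε := Metric.infDist yb (K x₀ l₀) / 2 with hε
  have hεpos : 0 < ε := by positivity
  have hVo : IsOpen {w : X | Metric.infDist w (K x₀ l₀) < ε} :=
    isOpen_lt (Metric.continuous_infDist_pt _) continuous_const
  have hVsup : K x₀ l₀ ⊆ {w : X | Metric.infDist w (K x₀ l₀) < ε} := fun w hw => by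
    show Metric.infDist w (K x₀ l₀) < ε
    rw [Metric.infDist_zero_of_mem hw]; exact hεpos
  obtain ⟨U, hU, hUp⟩ := husc _ hVo hVsup
  have htend : Tendsto (fun n => ((a n, μ n) : X × Λ)) atTop
      (𝓝[D ×ˢ (univ : Set Λ)] (x₀, l₀)) := by
    rw [tendsto_nhdsWithin_iff]
    exact ⟨hca.prodMk_nhds hcμ, Eventually.of_forall fun n => ⟨haD n, trivial⟩⟩
  have h2 : ∀ᶠ n in atTop, Metric.infDist (b n) (K x₀ l₀) ≤ ε := by
    filter_upwards [htend hU] with n hn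
    exact (hUp _ hn (hb n)).le
  have h3 : Metric.infDist yb (K x₀ l₀) ≤ ε :=
    le_of_tendsto (((Metric.continuous_infDist_pt _).tendsto yb).comp hcb) h2
  rw [hε] at h3
  linarith

set_option maxHeartbeats 2000000 in
/-- Theorem 4.2: lower semicontinuity at `(u₀, λ₀)` of the solution mapping `M₁` of the
parametric vector quasiequilibrium problem, under: `K(·,λ₀)` rotund, `K` continuous at
every point of `D × {λ₀}` with nonempty closed convex values, and `F` having the
`C`-inclusion property at every point of `D × D × {u₀}`. Reflexivity of the Banach space
`X` is encoded as surjectivity of the canonical inclusion into the double dual. -/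
theorem stmt_13 {Λ Ω Y X : Type*}
    [NormedAddCommGroup Λ] [NormedSpace ℝ Λ]
    [NormedAddCommGroup Ω] [NormedSpace ℝ Ω]
    [NormedAddCommGroup Y] [NormedSpace ℝ Y]
    [NormedAddCommGroup X] [NormedSpace ℝ X] [CompleteSpace X]
    (hrefl : Function.Surjective (NormedSpace.inclusionInDoubleDual ℝ X))
    (D : Set X) (hDne : D.Nonempty) (hDcomp : IsCompact D) (hDconv : Convex ℝ D)
    (K : X → Λ → Set X) (hKD : ∀ x ∈ D, ∀ l : Λ, K x l ⊆ D)
    (F : X → X → Ω → Set Y)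
    (C : Set Y) (hCclosed : IsClosed C) (hCint : (interior C).Nonempty)
    (u₀ : Ω) (l₀ : Λ)
    (M₁ : Ω × Λ → Set X)
    (hM₁ : ∀ p : Ω × Λ, M₁ p = {x | x ∈ D ∧ x ∈ closure (K x p.2) ∧
      ∀ y ∈ K x p.2, (F x y p.1 ∩ (-(interior C))ᶜ).Nonempty})
    (hMne : ∃ U ∈ 𝓝 ((u₀, l₀) : Ω × Λ), ∀ p ∈ U, (M₁ p).Nonempty)
    (hKrot : RotundOn D (fun x => K x l₀))
    (hKcont : ∀ x ∈ D,
      UscWithinAt (fun p : X × Λ => K p.1 p.2) (D ×ˢ (univ : Set Λ)) (x, l₀) ∧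
      LscWithinAt (fun p : X × Λ => K p.1 p.2) (D ×ˢ (univ : Set Λ)) (x, l₀))
    (hKval : ∀ x ∈ D, ∀ l : Λ, (K x l).Nonempty ∧ IsClosed (K x l) ∧ Convex ℝ (K x l))
    (hFincl : ∀ x ∈ D, ∀ y ∈ D,
      CInclusionWithinAt (fun q : X × X × Ω => F q.1 q.2.1 q.2.2) C
        (D ×ˢ D ×ˢ (univ : Set Ω)) (x, y, u₀)) :
    LscAt M₁ (u₀, l₀) := by
  intro x₀ hx₀ V hVopen hx₀V
  by_contra hcon
  push_neg at hcon
  obtain ⟨Um, hUm, hUm'⟩ := hMne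
  have hx₀M := hx₀
  rw [hM₁] at hx₀M
  obtain ⟨hx₀D, hx₀cl, hx₀sol⟩ := hx₀M
  have hx₀K : x₀ ∈ K x₀ l₀ := by
    have h := (hKval x₀ hx₀D l₀).2.1.closure_eq
    rw [← h]; exact hx₀cl
  -- a sequence of bad parameters converging to (u₀, l₀)
  have hseq : ∀ n : ℕ, ∃ q : Ω × Λ,
      (q ∈ Metric.ball ((u₀, l₀) : Ω × Λ) (1 / (n + 1)) ∧ q ∈ Um) ∧
        (M₁ q ∩ V) = ∅ := by
    intro n
    have hballmem : Metric.ball ((u₀, l₀) : Ω × Λ) (1 / (n + 1)) ∈ 𝓝 ((u₀, l₀) : Ω × Λ) :=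
      Metric.ball_mem_nhds _ (show (0 : ℝ) < 1 / (n + 1) by positivity)
    obtain ⟨q, hq1, hq2⟩ := hcon _ (Filter.inter_mem hballmem hUm)
    exact ⟨q, ⟨hq1.1, hq1.2⟩, hq2⟩
  choose p hp hpV' using hseq
  have hpV : ∀ n, ¬(M₁ (p n) ∩ V).Nonempty := fun n => by
    rw [hpV' n]; exact Set.not_nonempty_empty
  have hpd : ∀ n : ℕ, dist (p n) ((u₀, l₀) : Ω × Λ) < 1 / (n + 1) := fun n =>
    Metric.mem_ball.mp (hp n).1
  have htendp : Tendsto p atTop (𝓝 ((u₀, l₀) : Ω × Λ)) :=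
    tendsto_iff_dist_tendsto_zero.mpr (squeeze_zero (fun n => dist_nonneg)
      (fun n => (hpd n).le) tendsto_one_div_add_atTop_nhds_zero_nat)
  have htendl : Tendsto (fun n => (p n).2) atTop (𝓝 l₀) :=
    (continuous_snd.tendsto _).comp htendp
  -- pick solutions for the bad parameters
  have hzex : ∀ n, ∃ zz, zz ∈ M₁ (p n) := fun n => hUm' _ (hp n).2
  choose z hzM using hzex
  have hzfacts : ∀ n, z n ∈ D ∧ z n ∈ K (z n) ((p n).2) := by
    intro n
    have h := hzM n
    rw [hM₁] at h
    refine ⟨h.1, ?_⟩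
    have hc := (hKval _ h.1 ((p n).2)).2.1.closure_eq
    rw [← hc]; exact h.2.1
  have hzV : ∀ n, z n ∉ V := by
    intro n hn
    exact hpV n ⟨z n, hzM n, hn⟩
  obtain ⟨zb, hzbD, ψ, hψ, hzψ⟩ := hDcomp.tendsto_subseq (fun n => (hzfacts n).1)
  have hzbV : zb ∉ V := by
    have hclosed : IsClosed Vᶜ := hVopen.isClosed_compl
    exact hclosed.mem_of_tendsto hzψ (Eventually.of_forall fun n => hzV (ψ n))
  have hzbne : zb ≠ x₀ := fun h => hzbV (h ▸ hx₀V)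
  have hzbK : zb ∈ K zb l₀ :=
    mem_of_usc_limit' D K zb zb l₀ (hKcont zb hzbD).1
      (hKval zb hzbD l₀).2.1 (hKval zb hzbD l₀).1
      (fun n => z (ψ n)) (fun n => (p (ψ n)).2) (fun n => z (ψ n))
      (fun n => (hzfacts (ψ n)).1) (fun n => (hzfacts (ψ n)).2)
      hzψ (htendl.comp hψ.tendsto_atTop) hzψ
  -- rotundity gives a diagonal interior point of the graph of K(·, l₀)
  set G := GraphOn D (fun x => K x l₀) with hGdef
  have hmem₁ : ((x₀, x₀) : X × X) ∈ G := ⟨hx₀D, hx₀K⟩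
  have hmem₂ : ((zb, zb) : X × X) ∈ G := ⟨hzbD, hzbK⟩
  obtain ⟨l, hl, hlfr⟩ := hKrot.2 (x₀, x₀) hmem₁ (zb, zb) hmem₂
    (Ne.symm hzbne) (Ne.symm hzbne)
  set m := l • x₀ + (1 - l) • zb with hm
  have heqm : (l • ((x₀, x₀) : X × X) + (1 - l) • ((zb, zb) : X × X)) = ((m, m) : X × X) := by
    rw [Prod.smul_mk, Prod.smul_mk, Prod.mk_add_mk, hm]
  have hmmG : ((m, m) : X × X) ∈ G := by
    have h := hKrot.1 hmem₁ hmem₂ (le_of_lt hl.1)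
      (show (0 : ℝ) ≤ 1 - l by linarith [hl.2]) (show l + (1 - l) = 1 by ring)
    rwa [heqm] at h
  have hmint : ((m, m) : X × X) ∈ interior G := by
    by_contra hni
    rw [heqm] at hlfr
    refine hlfr ?_
    rw [← closure_diff_interior]
    exact ⟨subset_closure hmmG, hni⟩
  -- key: points near x₀ that are fixed points of K(·, lam) for all lam near l₀
  have key : ∀ ε : ℝ, 0 < ε → ∃ x' : X, x' ∈ D ∧ dist x' x₀ < ε ∧
      ∃ L ∈ 𝓝 l₀, ∀ lam ∈ L, x' ∈ K x' lam := by
    intro ε hε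
    have hdnn : (0 : ℝ) ≤ dist m x₀ := dist_nonneg
    set t : ℝ := min (1 / 2) (ε / (2 * (dist m x₀ + 1))) with htdef
    have ht0 : 0 < t := lt_min (by norm_num) (by positivity)
    have ht1 : t ≤ 1 / 2 := min_le_left _ _
    set xt := t • m + (1 - t) • x₀ with hxtdef
    have hxtd : dist xt x₀ < ε := by
      have hsub : xt - x₀ = t • (m - x₀) := by
        rw [hxtdef, smul_sub, sub_smul, one_smul]; abel
      rw [dist_eq_norm, hsub, norm_smul, Real.norm_eq_abs, abs_of_pos ht0, ← dist_eq_norm]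
      have h2 : t ≤ ε / (2 * (dist m x₀ + 1)) := min_le_right _ _
      have h3 : ε / (2 * (dist m x₀ + 1)) * dist m x₀ < ε := by
        rw [div_mul_eq_mul_div, div_lt_iff₀ (by positivity)]
        nlinarith
      nlinarith
    have hint : ((xt, xt) : X × X) ∈ interior G := by
      have hcomb := hKrot.1.combo_interior_closure_mem_interior hmint
        (subset_closure hmem₁) ht0 (show (0 : ℝ) ≤ 1 - t by linarith)
        (show t + (1 - t) = 1 by ring)
      have heq : (t • ((m, m) : X × X) + (1 - t) • ((x₀, x₀) : X × X)) = ((xt, xt) : X × X) := by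
        rw [Prod.smul_mk, Prod.smul_mk, Prod.mk_add_mk, hxtdef]
      rwa [heq] at hcomb
    obtain ⟨ρ, hρ0, hρ⟩ := Metric.isOpen_iff.mp isOpen_interior _ hint
    have hballG : ∀ x y : X, dist x xt < ρ → dist y xt < ρ → x ∈ D ∧ y ∈ K x l₀ := by
      intro x y hx hy
      have hmem : ((x, y) : X × X) ∈ Metric.ball ((xt, xt) : X × X) ρ := by
        rw [Metric.mem_ball, Prod.dist_eq]
        exact max_lt hx hy
      have hG2 : ((x, y) : X × X) ∈ G := interior_subset (hρ hmem)
      exact hG2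
    have hdist_self : dist xt xt < ρ := by simpa using hρ0
    have hxtD : xt ∈ D := (hballG xt xt hdist_self hdist_self).1
    set τ := ρ / 16 with hτdef
    have hτ0 : 0 < τ := by positivity
    set CB := Metric.closedBall xt (ρ / 2) with hCBdef
    have hCBD : CB ⊆ D := by
      intro x hx
      exact (hballG x xt (lt_of_le_of_lt (Metric.mem_closedBall.mp hx) (by linarith))
        hdist_self).1
    have hCBcomp : IsCompact CB := hDcomp.of_isClosed_subset Metric.isClosed_closedBall hCBD
    obtain ⟨N, hNsub, hNfin, hNcov⟩ := hCBcomp.elim_finite_subcover_image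
      (fun (y : X) (_ : y ∈ CB) => Metric.isOpen_ball)
      (fun x hx => Set.mem_biUnion hx (Metric.mem_ball_self hτ0))
    have hNK : ∀ y ∈ N, y ∈ K xt l₀ := by
      intro y hy
      exact (hballG xt y hdist_self
        (lt_of_le_of_lt (Metric.mem_closedBall.mp (hNsub hy)) (by linarith))).2
    have hU2 : ∀ y ∈ N, ∀ᶠ lam in 𝓝 l₀, (K xt lam ∩ Metric.ball y τ).Nonempty := by
      intro y hy
      obtain ⟨U, hUmem, hUp⟩ := (hKcont xt hxtD).2 y (hNK y hy) _ Metric.isOpen_ball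
        (Metric.mem_ball_self hτ0)
      have hg : Tendsto (fun lam : Λ => ((xt, lam) : X × Λ)) (𝓝 l₀)
          (𝓝[D ×ˢ (univ : Set Λ)] ((xt, l₀) : X × Λ)) := by
        rw [tendsto_nhdsWithin_iff]
        exact ⟨(continuous_const.prodMk continuous_id).tendsto l₀,
          Eventually.of_forall fun lam => ⟨hxtD, trivial⟩⟩
      filter_upwards [hg hUmem] with lam hlam using hUp _ hlam
    have hL : ∀ᶠ lam in 𝓝 l₀, ∀ y ∈ N, (K xt lam ∩ Metric.ball y τ).Nonempty :=
      (Filter.eventually_all_finite hNfin).mpr hU2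
    refine ⟨xt, hxtD, hxtd,
      {lam | ∀ y ∈ N, (K xt lam ∩ Metric.ball y τ).Nonempty}, hL, ?_⟩
    intro lam hlam
    by_contra hxo
    obtain ⟨-, hKcl, hKconv⟩ := hKval xt hxtD lam
    obtain ⟨f, u, hfu, hux⟩ := geometric_hahn_banach_closed_point hKconv hKcl hxo
    obtain ⟨y₁, hy₁N, -⟩ : ∃ y ∈ N, xt ∈ Metric.ball y τ := by
      have hxtCB : xt ∈ CB := Metric.mem_closedBall_self (by linarith)
      simpa using hNcov hxtCB
    obtain ⟨s₀, hs₀K, -⟩ := hlam y₁ hy₁N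
    have hf0 : f ≠ 0 := by
      rintro rfl
      have h1 := hfu s₀ hs₀K
      simp only [ContinuousLinearMap.zero_apply] at h1 hux
      linarith
    have hfpos : 0 < ‖f‖ := norm_pos_iff.mpr hf0
    obtain ⟨v, hv1, hv2⟩ := exists_unit_lt_apply' f hf0
    set ystar := xt + (ρ / 2) • v with hystardef
    have hystarCB : ystar ∈ CB := by
      rw [hCBdef, Metric.mem_closedBall, dist_eq_norm, hystardef]
      have h : xt + (ρ / 2) • v - xt = (ρ / 2) • v := by abel
      rw [h, norm_smul, Real.norm_eq_abs, abs_of_pos (by positivity)]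
      nlinarith [norm_nonneg v]
    obtain ⟨y₂, hy₂N, hy₂b⟩ : ∃ y ∈ N, ystar ∈ Metric.ball y τ := by
      simpa using hNcov hystarCB
    obtain ⟨s, hsK, hsb⟩ := hlam y₂ hy₂N
    have hd1 : ‖s - ystar‖ < 2 * τ := by
      have h1 : dist s y₂ < τ := Metric.mem_ball.mp hsb
      have h2 : dist ystar y₂ < τ := Metric.mem_ball.mp hy₂b
      calc ‖s - ystar‖ = dist s ystar := (dist_eq_norm _ _).symm
      _ ≤ dist s y₂ + dist ystar y₂ := dist_triangle_right _ _ _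
      _ < 2 * τ := by linarith
    have heqf : f s = f xt + (ρ / 2) * f v + f (s - ystar) := by
      have h : s = xt + (ρ / 2) • v + (s - ystar) := by rw [hystardef]; abel
      calc f s = f (xt + (ρ / 2) • v + (s - ystar)) := by rw [← h]
      _ = f xt + (ρ / 2) * f v + f (s - ystar) := by
          rw [map_add, map_add, map_smul, smul_eq_mul]
    have hbound : |f (s - ystar)| ≤ ‖f‖ * (2 * τ) := by
      calc |f (s - ystar)| = ‖f (s - ystar)‖ := (Real.norm_eq_abs _).symm
      _ ≤ ‖f‖ * ‖s - ystar‖ := f.le_opNorm _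
      _ ≤ ‖f‖ * (2 * τ) := mul_le_mul_of_nonneg_left hd1.le (norm_nonneg f)
    have hlt := hfu s hsK
    have habs := abs_le.mp hbound
    rw [hτdef] at habs
    nlinarith [mul_lt_mul_of_pos_left hv2 (by positivity : (0 : ℝ) < ρ / 2),
      habs.1, habs.2, hlt, hux, hfpos, hρ0]
  -- build approximating solutions and contradict the C-inclusion property
  obtain ⟨ε₀, hε₀, hball₀⟩ := Metric.isOpen_iff.mp hVopen x₀ hx₀V
  have main : ∀ k : ℕ, ∃ x' : X, ∃ n : ℕ, x' ∈ D ∧ x' ∈ V ∧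
      dist x' x₀ < 1 / (k + 1) ∧ k ≤ n ∧ x' ∈ K x' ((p n).2) := by
    intro k
    have hεk : (0 : ℝ) < min ε₀ (1 / (k + 1)) := lt_min hε₀ (by positivity)
    obtain ⟨x', hx'D, hx'd, L, hLmem, hLfix⟩ := key _ hεk
    have hx'V : x' ∈ V := hball₀ (Metric.mem_ball.mpr
      (lt_of_lt_of_le hx'd (min_le_left _ _)))
    have hx'd2 : dist x' x₀ < 1 / (k + 1) := lt_of_lt_of_le hx'd (min_le_right _ _)
    have hev : ∀ᶠ n in atTop, (p n).2 ∈ L := htendl hLmem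
    obtain ⟨n₀, hn₀⟩ := eventually_atTop.mp hev
    exact ⟨x', max n₀ k, hx'D, hx'V, hx'd2, le_max_right _ _,
      hLfix _ (hn₀ _ (le_max_left _ _))⟩
  choose xs ns hxsD hxsV hxsd hns hxsK using main
  have hxsnot : ∀ k, xs k ∉ M₁ (p (ns k)) := fun k hmem =>
    hpV (ns k) ⟨xs k, hmem, hxsV k⟩
  have hy : ∀ k, ∃ y, y ∈ K (xs k) ((p (ns k)).2) ∧
      ¬(F (xs k) y ((p (ns k)).1) ∩ (-(interior C))ᶜ).Nonempty := by
    intro k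
    have h := hxsnot k
    rw [hM₁] at h
    simp only [mem_setOf_eq, not_and, not_forall] at h
    have h2 := h (hxsD k) (subset_closure (hxsK k))
    obtain ⟨y, hy1, hy2⟩ := h2
    exact ⟨y, hy1, hy2⟩
  choose ys hysK hysF using hy
  have hysD : ∀ k, ys k ∈ D := fun k => hKD (xs k) (hxsD k) _ (hysK k)
  obtain ⟨yb, hybD, φ, hφ, hyφ⟩ := hDcomp.tendsto_subseq hysD
  have hmono : ∀ k : ℕ, (1 : ℝ) / (φ k + 1) ≤ 1 / (k + 1) := by
    intro k
    apply one_div_le_one_div_of_le (by positivity)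
    have h := hφ.le_apply (x := k)
    push_cast
    exact_mod_cast add_le_add_left (Nat.cast_le.mpr h) 1
  have hxφ : Tendsto (fun k => xs (φ k)) atTop (𝓝 x₀) := by
    refine tendsto_iff_dist_tendsto_zero.mpr (squeeze_zero (fun n => dist_nonneg)
      (fun n => ?_) tendsto_one_div_add_atTop_nhds_zero_nat)
    exact le_trans (hxsd (φ n)).le (hmono n)
  have hpφ : Tendsto (fun k => p (ns (φ k))) atTop (𝓝 ((u₀, l₀) : Ω × Λ)) := by
    refine tendsto_iff_dist_tendsto_zero.mpr (squeeze_zero (fun n => dist_nonneg)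
      (fun n => ?_) tendsto_one_div_add_atTop_nhds_zero_nat)
    have h1 : dist (p (ns (φ n))) ((u₀, l₀) : Ω × Λ) < 1 / (ns (φ n) + 1) := hpd _
    have h2 : (1 : ℝ) / (ns (φ n) + 1) ≤ 1 / (φ n + 1) := by
      apply one_div_le_one_div_of_le (by positivity)
      exact_mod_cast add_le_add_left (Nat.cast_le.mpr (hns (φ n))) 1
    exact le_trans h1.le (le_trans h2 (hmono n))
  have hybK : yb ∈ K x₀ l₀ :=
    mem_of_usc_limit' D K x₀ yb l₀ (hKcont x₀ hx₀D).1
      (hKval x₀ hx₀D l₀).2.1 (hKval x₀ hx₀D l₀).1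
      (fun k => xs (φ k)) (fun k => (p (ns (φ k))).2) (fun k => ys (φ k))
      (fun k => hxsD (φ k)) (fun k => hysK (φ k)) hxφ
      ((continuous_snd.tendsto _).comp hpφ) hyφ
  have hsol : (F x₀ yb u₀ ∩ (-(interior C))ᶜ).Nonempty := hx₀sol yb hybK
  obtain ⟨k, hk⟩ := hFincl x₀ hx₀D yb hybD
    (fun k => (xs (φ k), ys (φ k), (p (ns (φ k))).1))
    (fun k => ⟨hxsD (φ k), hysD (φ k), trivial⟩)
    (hxφ.prodMk_nhds (hyφ.prodMk_nhds ((continuous_fst.tendsto _).comp hpφ))) hsol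
  exact hysF (φ k) hk
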